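/- If m ≥ n ≥ 3 with n = 3 and m ≥ 5, or m ≥ n ≥ 4, then for every vertex subset X of P_n □ P_m with |X| ≤ 2 we have Δ((P_n □ P_m) − X) ≥ 3; i.e., min over X of max(Δ(G−X), |X|) > 2 for such grids. -/

import Mathlib

open scoped Classical

/-- `Δ(G − X)`. -/
noncomputable def delMaxDeg {V : Type*} [Fintype V] (G : SimpleGraph V) (X : Finset V) : ℕ :=
  (Xᶜ).sup fun v => ((Xᶜ).filter fun w => G.Adj v w).card

section Helpers
open Finset

lemma pg_deg_le (n : ℕ) (i : Fin n) : (SimpleGraph.pathGraph n).degree i ≤ 2 := by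
  rw [SimpleGraph.degree]
  have hsub : (SimpleGraph.pathGraph n).neighborFinset i ⊆
      (univ.filter fun j : Fin n => (j : ℕ) + 1 = (i : ℕ)) ∪
      (univ.filter fun j : Fin n => (i : ℕ) + 1 = (j : ℕ)) := by
    intro j hj
    rw [SimpleGraph.mem_neighborFinset, SimpleGraph.pathGraph_adj] at hj
    simp only [mem_union, mem_filter, mem_univ, true_and]
    tauto
  calc _ ≤ _ := card_le_card hsub
    _ ≤ _ + _ := card_union_le _ _
    _ ≤ 1 + 1 := by
        gcongr <;> rw [card_le_one] <;> intro a ha b hb <;>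
          simp only [mem_filter] at ha hb <;> exact Fin.ext (by omega)

lemma pg_deg_ge_one (n : ℕ) (hn : 2 ≤ n) (i : Fin n) :
    1 ≤ (SimpleGraph.pathGraph n).degree i := by
  rw [SimpleGraph.degree, Nat.one_le_iff_ne_zero, ← Nat.pos_iff_ne_zero, card_pos]
  by_cases hlt : (i : ℕ) + 1 < n
  · exact ⟨⟨(i : ℕ) + 1, hlt⟩, by
      rw [SimpleGraph.mem_neighborFinset, SimpleGraph.pathGraph_adj]; left; rfl⟩
  · have hi : (i : ℕ) = n - 1 := by have := i.isLt; omega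
    exact ⟨⟨(i : ℕ) - 1, by omega⟩, by
      rw [SimpleGraph.mem_neighborFinset, SimpleGraph.pathGraph_adj]; right; simp; omega⟩

lemma pg_deg_ge_two (n : ℕ) (i : Fin n) (h0 : 0 < (i : ℕ)) (h1 : (i : ℕ) + 1 < n) :
    2 ≤ (SimpleGraph.pathGraph n).degree i := by
  rw [SimpleGraph.degree]
  have hsub : ({⟨(i : ℕ) - 1, by omega⟩, ⟨(i : ℕ) + 1, h1⟩} : Finset (Fin n)) ⊆
      (SimpleGraph.pathGraph n).neighborFinset i := by
    intro j hj
    rw [SimpleGraph.mem_neighborFinset, SimpleGraph.pathGraph_adj]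
    rcases mem_insert.mp hj with h | h
    · right; subst h; simp; omega
    · left; rw [mem_singleton] at h; subst h; rfl
  calc (2 : ℕ) = ({⟨(i : ℕ) - 1, by omega⟩, ⟨(i : ℕ) + 1, h1⟩} : Finset (Fin n)).card := by
        rw [card_insert_of_notMem, card_singleton]
        simp only [mem_singleton]
        intro hc
        have := Fin.mk.injEq .. ▸ hc
        omega
    _ ≤ _ := card_le_card hsub

lemma delMaxDeg_ge {V : Type*} [Fintype V] (G : SimpleGraph V) (X : Finset V) (v : V)
    (hv : v ∉ X) (s : Finset V) (hs : ∀ w ∈ s, G.Adj v w ∧ w ∉ X) :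
    s.card ≤ delMaxDeg G X := by
  unfold delMaxDeg
  refine le_trans (Finset.card_le_card ?_)
    (Finset.le_sup (f := fun v => ((Xᶜ).filter fun w => G.Adj v w).card)
      (Finset.mem_compl.mpr hv))
  intro w hw
  rw [Finset.mem_filter, Finset.mem_compl]
  exact ⟨(hs w hw).2, (hs w hw).1⟩

section
variable (n m : ℕ)

lemma pg_deg_le' (i : Fin n) : (SimpleGraph.pathGraph n).degree i ≤ 2 := pg_deg_le n i
lemma pg_deg_ge_one' (hn : 2 ≤ n) (i : Fin n) : 1 ≤ (SimpleGraph.pathGraph n).degree i :=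
  pg_deg_ge_one n hn i
lemma pg_deg_ge_two' (i : Fin n) (h0 : 0 < (i : ℕ)) (h1 : (i : ℕ) + 1 < n) :
    2 ≤ (SimpleGraph.pathGraph n).degree i := pg_deg_ge_two n i h0 h1

lemma exists_good (hn : 3 ≤ n) (hm : 3 ≤ m) (hnm : 15 ≤ n * m)
    (X : Finset (Fin n × Fin m)) (hX : X.card ≤ 2) :
    ∃ v : Fin n × Fin m, v ∉ X ∧
      3 ≤ (SimpleGraph.boxProd (SimpleGraph.pathGraph n) (SimpleGraph.pathGraph m)).degree v ∧
      ∀ w, (SimpleGraph.boxProd (SimpleGraph.pathGraph n)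
          (SimpleGraph.pathGraph m)).Adj v w → w ∉ X := by
  set G := SimpleGraph.boxProd (SimpleGraph.pathGraph n) (SimpleGraph.pathGraph m) with hG
  have hdeg : ∀ x : Fin n × Fin m, G.degree x =
      (SimpleGraph.pathGraph n).degree x.1 + (SimpleGraph.pathGraph m).degree x.2 := fun x =>
    SimpleGraph.degree_boxProd x
  set B : Finset (Fin n × Fin m) := X.biUnion fun x => insert x (G.neighborFinset x) with hB
  have hBcard : B.card ≤ 10 := by
    calc B.card ≤ ∑ x ∈ X, (insert x (G.neighborFinset x)).card := card_biUnion_le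
      _ ≤ ∑ _x ∈ X, 5 := by
          apply Finset.sum_le_sum
          intro x _
          calc (insert x (G.neighborFinset x)).card ≤ (G.neighborFinset x).card + 1 :=
                card_insert_le _ _
            _ ≤ 4 + 1 := by
                have : (G.neighborFinset x).card = G.degree x := rfl
                rw [this, hdeg x]
                have := pg_deg_le' n x.1
                have := pg_deg_le' m x.2
                omega
      _ = X.card * 5 := by rw [Finset.sum_const, smul_eq_mul]
      _ ≤ 10 := by omega
  set D : Finset (Fin n × Fin m) := univ.filter fun v =>
    ¬(((v.1 : ℕ) = 0 ∨ (v.1 : ℕ) = n - 1) ∧ ((v.2 : ℕ) = 0 ∨ (v.2 : ℕ) = m - 1)) with hD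
  have hDcard : n * m ≤ D.card + 4 := by
    have hsplit := Finset.card_filter_add_card_filter_not
      (s := (univ : Finset (Fin n × Fin m))) (p := fun v =>
        ¬(((v.1 : ℕ) = 0 ∨ (v.1 : ℕ) = n - 1) ∧ ((v.2 : ℕ) = 0 ∨ (v.2 : ℕ) = m - 1)))
    have huniv : (univ : Finset (Fin n × Fin m)).card = n * m := by
      simp [Fintype.card_prod]
    have hcornsub : (univ.filter fun v : Fin n × Fin m =>
        ¬¬(((v.1 : ℕ) = 0 ∨ (v.1 : ℕ) = n - 1) ∧ ((v.2 : ℕ) = 0 ∨ (v.2 : ℕ) = m - 1))) ⊆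
        ({(⟨0, by omega⟩, ⟨0, by omega⟩), (⟨0, by omega⟩, ⟨m - 1, by omega⟩),
          (⟨n - 1, by omega⟩, ⟨0, by omega⟩), (⟨n - 1, by omega⟩, ⟨m - 1, by omega⟩)} :
          Finset (Fin n × Fin m)) := by
      intro v hv
      rw [mem_filter, not_not] at hv
      obtain ⟨-, h1, h2⟩ := hv
      have e1 : v.1 = (⟨0, by omega⟩ : Fin n) ∨ v.1 = (⟨n - 1, by omega⟩ : Fin n) := by
        rcases h1 with h | h
        · left; exact Fin.ext h
        · right; exact Fin.ext h
      have e2 : v.2 = (⟨0, by omega⟩ : Fin m) ∨ v.2 = (⟨m - 1, by omega⟩ : Fin m) := by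
        rcases h2 with h | h
        · left; exact Fin.ext h
        · right; exact Fin.ext h
      simp only [mem_insert, mem_singleton]
      rcases e1 with e1 | e1 <;> rcases e2 with e2 | e2 <;>
        simp [Prod.ext_iff, e1, e2]
    have hc4 : (univ.filter fun v : Fin n × Fin m =>
        ¬¬(((v.1 : ℕ) = 0 ∨ (v.1 : ℕ) = n - 1) ∧ ((v.2 : ℕ) = 0 ∨ (v.2 : ℕ) = m - 1))).card ≤ 4 := by
      refine le_trans (card_le_card hcornsub) ?_
      refine le_trans (card_insert_le _ _) ?_
      refine le_trans (Nat.add_le_add_right (card_insert_le _ _) 1) ?_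
      refine le_trans (Nat.add_le_add_right (Nat.add_le_add_right (card_insert_le _ _) 1) 1) ?_
      simp
    rw [← hD] at hsplit
    omega
  have hdiff : 1 ≤ (D \ B).card := by
    have := Finset.le_card_sdiff B D
    omega
  obtain ⟨v, hv⟩ := Finset.card_pos.mp (by omega : 0 < (D \ B).card)
  rw [mem_sdiff] at hv
  obtain ⟨hvD, hvB⟩ := hv
  refine ⟨v, ?_, ?_, ?_⟩
  · intro hvX
    exact hvB (mem_biUnion.mpr ⟨v, hvX, mem_insert_self _ _⟩)
  · rw [hdeg v]
    rw [hD, mem_filter, not_and_or] at hvD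
    have hv1 := v.1.isLt
    have hv2 := v.2.isLt
    rcases hvD.2 with h | h
    · have h2 := pg_deg_ge_two' n v.1 (by omega) (by omega)
      have h1 := pg_deg_ge_one' m (by omega) v.2
      omega
    · have h2 := pg_deg_ge_two' m v.2 (by omega) (by omega)
      have h1 := pg_deg_ge_one' n (by omega) v.1
      omega
  · intro w hadj hwX
    apply hvB
    exact mem_biUnion.mpr ⟨w, hwX, mem_insert_of_mem
      ((SimpleGraph.mem_neighborFinset _ _ _).mpr hadj.symm)⟩

end
end Helpers

/-- For grids `P_n □ P_m` with `n = 3, m ≥ 5` or `m ≥ n ≥ 4`, deleting any two vertices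
leaves a graph of maximum degree at least `3`; hence `min_X max(Δ(G−X), |X|) > 2`. -/
theorem grid_del_two_maxDegree_ge_three (n m : ℕ)
    (h : (n = 3 ∧ 5 ≤ m) ∨ (4 ≤ n ∧ n ≤ m)) :
    (∀ X : Finset (Fin n × Fin m), X.card ≤ 2 →
      3 ≤ delMaxDeg (SimpleGraph.boxProd (SimpleGraph.pathGraph n) (SimpleGraph.pathGraph m)) X) ∧
    2 < sInf (Set.range fun X : Finset (Fin n × Fin m) =>
        max (delMaxDeg (SimpleGraph.boxProd (SimpleGraph.pathGraph n)
          (SimpleGraph.pathGraph m)) X) X.card) := by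
  have hn : 3 ≤ n := by rcases h with ⟨h1, _⟩ | ⟨h1, _⟩ <;> omega
  have hm : 3 ≤ m := by rcases h with ⟨h1, h2⟩ | ⟨h1, h2⟩ <;> omega
  have hnm : 15 ≤ n * m := by
    rcases h with ⟨h1, h2⟩ | ⟨h1, h2⟩
    · subst h1; omega
    · nlinarith
  have main : ∀ X : Finset (Fin n × Fin m), X.card ≤ 2 →
      3 ≤ delMaxDeg (SimpleGraph.boxProd (SimpleGraph.pathGraph n)
        (SimpleGraph.pathGraph m)) X := by
    intro X hX
    obtain ⟨v, hvX, hdeg, hnbr⟩ := exists_good n m hn hm hnm X hX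
    set G := SimpleGraph.boxProd (SimpleGraph.pathGraph n) (SimpleGraph.pathGraph m) with hG
    calc (3 : ℕ) ≤ G.degree v := hdeg
      _ = (G.neighborFinset v).card := rfl
      _ ≤ delMaxDeg G X := by
          refine delMaxDeg_ge G X v hvX _ ?_
          intro w hw
          rw [SimpleGraph.mem_neighborFinset] at hw
          exact ⟨hw, hnbr w hw⟩
  refine ⟨main, ?_⟩
  set f := fun X : Finset (Fin n × Fin m) =>
      max (delMaxDeg (SimpleGraph.boxProd (SimpleGraph.pathGraph n)
        (SimpleGraph.pathGraph m)) X) X.card with hf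
  have hne : (Set.range f).Nonempty := ⟨f ∅, Set.mem_range_self _⟩
  obtain ⟨X, hXeq⟩ := Nat.sInf_mem hne
  rw [← hXeq]
  by_cases hc : X.card ≤ 2
  · have := main X hc
    calc (2 : ℕ) < 3 := by omega
      _ ≤ _ := le_trans this (le_max_left _ _)
  · calc (2 : ℕ) < X.card := by omega
      _ ≤ f X := le_max_right _ _
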